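/- Fix real numbers a, b with 1 < a ≤ b. Then, as t tends to b from the right, the period integral I₅(a,b;t) = ∫_{b}^{t} √((z−b)/((t²−z²)(z²−1)(z+a))) dz tends to 0, and the period integral J₅(a,b;t) = ∫_{b}^{t} √((z+a)/((t²−z²)(z²−1)(z−b))) dz tends to π·√((a+b)/(2b(b²−1))). -/

import Mathlib

set_option maxHeartbeats 1000000


open MeasureTheory intervalIntegral Real Filter Topology

/-- Period integral `I₁`. -/
noncomputable def I1 (a b t : ℝ) : ℝ :=
  ∫ z in (-t)..(-a), Real.sqrt ((b - z) / ((t ^ 2 - z ^ 2) * (z ^ 2 - 1) * (-z - a)))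

/-- Period integral `J₁`. -/
noncomputable def J1 (a b t : ℝ) : ℝ :=
  ∫ z in (-t)..(-a), Real.sqrt ((-z - a) / ((t ^ 2 - z ^ 2) * (z ^ 2 - 1) * (b - z)))

/-- Period integral `I₂`. -/
noncomputable def I2 (a b t : ℝ) : ℝ :=
  ∫ z in (-a)..(-1), Real.sqrt ((b - z) / ((t ^ 2 - z ^ 2) * (z ^ 2 - 1) * (z + a)))

/-- Period integral `J₂`. -/
noncomputable def J2 (a b t : ℝ) : ℝ :=
  ∫ z in (-a)..(-1), Real.sqrt ((z + a) / ((t ^ 2 - z ^ 2) * (z ^ 2 - 1) * (b - z)))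

/-- Period integral `I₄`. -/
noncomputable def I4 (a b t : ℝ) : ℝ :=
  ∫ z in (1:ℝ)..b, Real.sqrt ((b - z) / ((t ^ 2 - z ^ 2) * (z ^ 2 - 1) * (z + a)))

/-- Period integral `J₄`. -/
noncomputable def J4 (a b t : ℝ) : ℝ :=
  ∫ z in (1:ℝ)..b, Real.sqrt ((z + a) / ((t ^ 2 - z ^ 2) * (z ^ 2 - 1) * (b - z)))

/-- Period integral `I₅`. -/
noncomputable def I5 (a b t : ℝ) : ℝ :=
  ∫ z in b..t, Real.sqrt ((z - b) / ((t ^ 2 - z ^ 2) * (z ^ 2 - 1) * (z + a)))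

/-- Period integral `J₅`. -/
noncomputable def J5 (a b t : ℝ) : ℝ :=
  ∫ z in b..t, Real.sqrt ((z + a) / ((t ^ 2 - z ^ 2) * (z ^ 2 - 1) * (z - b)))

/-- The period quotient `Q(a,b;t)`. -/
noncomputable def Q (a b t : ℝ) : ℝ :=
  (I1 a b t + I5 a b t) / (I2 a b t + I4 a b t)
    - (J1 a b t + J5 a b t) / (J2 a b t + J4 a b t)

section StmtFiveAux
open Set

lemma aux_sqrt_bound {u : ℝ} (hu : u ∈ Set.Ioo (0:ℝ) 1) :
    1 / Real.sqrt (u * (1 - u)) ≤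
      Real.sqrt 2 * (1 / Real.sqrt u) + Real.sqrt 2 * (1 / Real.sqrt (1 - u)) := by
  obtain ⟨h1, h1'⟩ := hu
  have h2 : 0 < 1 - u := by linarith
  have key : ∀ v w : ℝ, 0 < v → 1/2 ≤ w →
      1 / Real.sqrt (v * w) ≤ Real.sqrt 2 * (1 / Real.sqrt v) := by
    intro v w hv hw2
    have hle : Real.sqrt (v / 2) ≤ Real.sqrt (v * w) :=
      Real.sqrt_le_sqrt (by nlinarith)
    have hpos : 0 < Real.sqrt (v / 2) := Real.sqrt_pos.mpr (by positivity)
    calc 1 / Real.sqrt (v * w) ≤ 1 / Real.sqrt (v / 2) :=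
          one_div_le_one_div_of_le hpos hle
      _ = Real.sqrt 2 * (1 / Real.sqrt v) := by
          rw [Real.sqrt_div hv.le, one_div_div, mul_one_div, div_eq_mul_one_div]
  rcases le_total u (1/2) with hc | hc
  · have h := key u (1 - u) h1 (by linarith)
    have t2 : 0 ≤ Real.sqrt 2 * (1 / Real.sqrt (1 - u)) := by positivity
    linarith
  · have h := key (1 - u) u h2 hc
    rw [mul_comm (1 - u) u] at h
    have t1 : 0 ≤ Real.sqrt 2 * (1 / Real.sqrt u) := by positivity
    linarith

lemma intInt_one_div_sqrt : IntervalIntegrable (fun u : ℝ => 1 / Real.sqrt u) volume 0 1 := by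
  have h := intervalIntegral.intervalIntegrable_rpow' (a := 0) (b := 1) (r := -(1/2))
    (by norm_num)
  rw [intervalIntegrable_iff] at h ⊢
  apply h.congr_fun ?_ measurableSet_uIoc
  intro u hu
  rw [Set.uIoc_of_le (by norm_num : (0:ℝ) ≤ 1)] at hu
  show u ^ (-(1/2):ℝ) = 1 / Real.sqrt u
  rw [Real.rpow_neg hu.1.le, ← Real.sqrt_eq_rpow, one_div]

lemma intInt_one_div_sqrt' :
    IntervalIntegrable (fun u : ℝ => 1 / Real.sqrt (1 - u)) volume 0 1 := by
  have h := intInt_one_div_sqrt.comp_sub_left 1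
  norm_num at h
  simpa [one_div] using h.symm

lemma intInt_A : IntervalIntegrable (fun u : ℝ => 1 / Real.sqrt (u * (1 - u))) volume 0 1 := by
  apply IntervalIntegrable.mono_fun'
    ((intInt_one_div_sqrt.const_mul (Real.sqrt 2)).add
      (intInt_one_div_sqrt'.const_mul (Real.sqrt 2)))
  · exact (Measurable.sqrt (measurable_id.mul (measurable_const.sub measurable_id))).inv.const_mul 1 |>.aestronglyMeasurable
  · rw [Filter.EventuallyLE, ae_restrict_iff' measurableSet_uIoc]
    refine Filter.Eventually.of_forall fun u hu => ?_
    rw [Set.uIoc_of_le (by norm_num : (0:ℝ) ≤ 1)] at hu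
    have hnn : (0:ℝ) ≤ 1 / Real.sqrt (u * (1 - u)) := by positivity
    rw [Real.norm_eq_abs, abs_of_nonneg hnn]
    rcases eq_or_lt_of_le hu.2 with h1 | h1
    · subst h1
      rw [show (1:ℝ) * (1 - 1) = 0 by norm_num, Real.sqrt_zero, div_zero]
      positivity
    · exact aux_sqrt_bound ⟨hu.1, h1⟩

lemma integral_A : ∫ u in (0:ℝ)..1, 1 / Real.sqrt (u * (1 - u)) = π := by
  have hd : ∀ u ∈ Set.Ioo (0:ℝ) 1, HasDerivAt (fun v => Real.arcsin (2 * v - 1))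
      (1 / Real.sqrt (u * (1 - u))) u := by
    intro u hu
    have h1 : (2 * u - 1) ≠ -1 := by nlinarith [hu.1]
    have h2 : (2 * u - 1) ≠ 1 := by nlinarith [hu.2]
    have hin : HasDerivAt (fun v : ℝ => 2 * v - 1) 2 u := by
      simpa using ((hasDerivAt_id u).const_mul (2:ℝ)).sub_const 1
    have h : HasDerivAt (fun v => Real.arcsin (2 * v - 1))
        (1 / Real.sqrt (1 - (2 * u - 1) ^ 2) * 2) u :=
      by have := (Real.hasDerivAt_arcsin h1 h2).comp u hin; exact this
    have e1 : 1 - (2 * u - 1) ^ 2 = 4 * (u * (1 - u)) := by ring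
    have hs : Real.sqrt (1 - (2 * u - 1) ^ 2) = 2 * Real.sqrt (u * (1 - u)) := by
      rw [e1, Real.sqrt_mul (by norm_num : (0:ℝ) ≤ 4),
        show Real.sqrt 4 = 2 by
          rw [show (4:ℝ) = 2 ^ 2 by norm_num, Real.sqrt_sq (by norm_num : (0:ℝ) ≤ 2)]]
    have hpos : 0 < Real.sqrt (u * (1 - u)) :=
      Real.sqrt_pos.mpr (by nlinarith [hu.1, hu.2])
    convert h using 1
    rw [hs]
    field_simp
  have h := intervalIntegral.integral_eq_sub_of_hasDeriv_right_of_le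
    (by norm_num : (0:ℝ) ≤ 1)
    (Continuous.continuousOn (Real.continuous_arcsin.comp (by continuity)))
    (fun u hu => (hd u hu).hasDerivWithinAt) intInt_A
  rw [h]
  norm_num [Real.arcsin_one, Real.arcsin_neg_one]

lemma comp_rep (f : ℝ → ℝ) {b t : ℝ} (h : b < t) :
    (∫ z in b..t, f z) = ∫ u in (0:ℝ)..1, (t - b) * f ((t - b) * u + b) := by
  rw [intervalIntegral.integral_const_mul,
    intervalIntegral.integral_comp_mul_add f (by linarith : t - b ≠ 0) b, smul_eq_mul,
    ← mul_assoc, mul_inv_cancel₀ (by linarith : t - b ≠ 0), one_mul]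
  norm_num

end StmtFiveAux

open Set in
/-- As `t → b⁺`, `I₅(a,b;t) → 0` and `J₅(a,b;t) → π √((a+b)/(2b(b²−1)))`. -/
theorem stmt5 (a b : ℝ) (ha : 1 < a) (hab : a ≤ b) :
    Tendsto (fun t : ℝ => I5 a b t) (𝓝[>] b) (𝓝 0) ∧
    Tendsto (fun t : ℝ => J5 a b t) (𝓝[>] b)
      (𝓝 (π * Real.sqrt ((a + b) / (2 * b * (b ^ 2 - 1))))) := by
  have hb1 : 1 < b := lt_of_lt_of_le ha hab
  have hb0 : 0 < b := by linarith
  have hb2 : 0 < b ^ 2 - 1 := by nlinarith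
  have hba : 0 < b + a := by linarith
  have hIoo : ∀ᵐ u : ℝ ∂volume, u ∈ Set.uIoc (0:ℝ) 1 → u ∈ Set.Ioo (0:ℝ) 1 := by
    have h1 : ∀ᵐ u : ℝ ∂volume, u ≠ 1 := by
      refine ae_iff.mpr ?_
      simp only [ne_eq, not_not, Set.setOf_eq_eq_singleton]
      exact measure_singleton 1
    filter_upwards [h1] with u hu1 hmem
    rw [Set.uIoc_of_le (by norm_num : (0:ℝ) ≤ 1)] at hmem
    exact ⟨hmem.1, lt_of_le_of_ne hmem.2 hu1⟩
  have hev : ∀ᶠ t in 𝓝[>] b, t ∈ Set.Ioo b (b + 1) :=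
    Ioo_mem_nhdsGT_of_mem ⟨le_refl b, by linarith⟩
  -- key algebraic identity for J
  have keyJ : ∀ t ∈ Set.Ioi b, ∀ u ∈ Set.Ioo (0:ℝ) 1,
      (t - b) * Real.sqrt ((((t - b) * u + b) + a) /
        ((t ^ 2 - ((t - b) * u + b) ^ 2) * (((t - b) * u + b) ^ 2 - 1) *
          (((t - b) * u + b) - b)))
      = Real.sqrt ((((t - b) * u + b) + a) /
          ((u * (1 - u)) * ((t + ((t - b) * u + b)) * (((t - b) * u + b) ^ 2 - 1)))) := by
    intro t ht u hu
    have hs : 0 < t - b := sub_pos.mpr ht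
    have hzb : b < (t - b) * u + b := by nlinarith [hu.1]
    have hz1 : 1 < (t - b) * u + b := by linarith
    have hz2 : 0 < ((t - b) * u + b) ^ 2 - 1 := by nlinarith
    have htz : 0 < t + ((t - b) * u + b) := by linarith
    have hXj : 0 < (u * (1 - u)) * ((t + ((t - b) * u + b)) * (((t - b) * u + b) ^ 2 - 1)) :=
      mul_pos (mul_pos hu.1 (by linarith [hu.2])) (mul_pos htz hz2)
    have hnum : 0 ≤ ((t - b) * u + b) + a := by linarith
    have hfac : (t ^ 2 - ((t - b) * u + b) ^ 2) * (((t - b) * u + b) ^ 2 - 1) *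
          (((t - b) * u + b) - b)
        = ((u * (1 - u)) * ((t + ((t - b) * u + b)) * (((t - b) * u + b) ^ 2 - 1)))
            * (t - b) ^ 2 := by ring
    rw [hfac, ← div_div,
      Real.sqrt_div (div_nonneg hnum hXj.le) ((t - b) ^ 2),
      Real.sqrt_sq hs.le, mul_comm, div_mul_cancel₀ _ hs.ne']
  -- key algebraic identity for I
  have keyI : ∀ t ∈ Set.Ioi b, ∀ u : ℝ,
      (((t - b) * u + b) - b) /
        ((t ^ 2 - ((t - b) * u + b) ^ 2) * (((t - b) * u + b) ^ 2 - 1) *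
          (((t - b) * u + b) + a))
      = u / ((1 - u) * ((t + ((t - b) * u + b)) *
          ((((t - b) * u + b) ^ 2 - 1) * (((t - b) * u + b) + a)))) := by
    intro t ht u
    have hs : 0 < t - b := sub_pos.mpr ht
    have hfac : (t ^ 2 - ((t - b) * u + b) ^ 2) * (((t - b) * u + b) ^ 2 - 1) *
          (((t - b) * u + b) + a)
        = (t - b) * ((1 - u) * ((t + ((t - b) * u + b)) *
            ((((t - b) * u + b) ^ 2 - 1) * (((t - b) * u + b) + a)))) := by ring
    have hnum : ((t - b) * u + b) - b = (t - b) * u := by ring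
    rw [hnum, hfac, mul_div_mul_left _ _ hs.ne']
  constructor
  · -- I5 → 0
    have hI : Tendsto (fun t => ∫ u in (0:ℝ)..1,
        (t - b) * Real.sqrt ((((t - b) * u + b) - b) /
          ((t ^ 2 - ((t - b) * u + b) ^ 2) * (((t - b) * u + b) ^ 2 - 1) *
            (((t - b) * u + b) + a)))) (𝓝[>] b)
        (𝓝 (∫ u in (0:ℝ)..1, (0:ℝ))) := by
      apply intervalIntegral.tendsto_integral_filter_of_dominated_convergence
        (bound := fun u => Real.sqrt (1 / ((b + b) * ((b ^ 2 - 1) * (b + a)))) *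
          (1 / Real.sqrt (1 - u)))
      · refine Filter.Eventually.of_forall fun t => ?_
        have hc1 : Continuous fun u : ℝ => ((t - b) * u + b) - b := by fun_prop
        have hc2 : Continuous fun u : ℝ =>
            (t ^ 2 - ((t - b) * u + b) ^ 2) * (((t - b) * u + b) ^ 2 - 1) *
              (((t - b) * u + b) + a) := by fun_prop
        exact ((Measurable.sqrt (hc1.measurable.div hc2.measurable)).const_mul
          _).aestronglyMeasurable
      · filter_upwards [hev] with t ht
        filter_upwards [hIoo] with u hu' hmem
        have hu := hu' hmem
        have hs : 0 < t - b := sub_pos.mpr ht.1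
        have hzb : b < (t - b) * u + b := by nlinarith [hu.1]
        have hzt : (t - b) * u + b ≤ t := by nlinarith [hu.2]
        have hz1 : 1 < (t - b) * u + b := by linarith
        have hz2 : 0 < ((t - b) * u + b) ^ 2 - 1 := by nlinarith
        have hcI : 0 < (b + b) * ((b ^ 2 - 1) * (b + a)) :=
          mul_pos (by linarith) (mul_pos hb2 hba)
        have hXge : (1 - u) * ((b + b) * ((b ^ 2 - 1) * (b + a)))
            ≤ (1 - u) * ((t + ((t - b) * u + b)) *
              ((((t - b) * u + b) ^ 2 - 1) * (((t - b) * u + b) + a))) := by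
          apply mul_le_mul_of_nonneg_left ?_ (by linarith [hu.2])
          apply mul_le_mul (by linarith) ?_ (mul_pos hb2 hba).le (by linarith)
          apply mul_le_mul (by nlinarith) (by linarith) hba.le hz2.le
        have hq : u / ((1 - u) * ((t + ((t - b) * u + b)) *
              ((((t - b) * u + b) ^ 2 - 1) * (((t - b) * u + b) + a))))
            ≤ 1 / ((1 - u) * ((b + b) * ((b ^ 2 - 1) * (b + a)))) :=
          div_le_div₀ (by norm_num) hu.2.le
            (mul_pos (by linarith [hu.2]) hcI) hXge
        rw [Real.norm_eq_abs,
          abs_of_nonneg (mul_nonneg (by linarith) (Real.sqrt_nonneg _))]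
        rw [keyI t ht.1 u]
        calc (t - b) * Real.sqrt (u / ((1 - u) * ((t + ((t - b) * u + b)) *
              ((((t - b) * u + b) ^ 2 - 1) * (((t - b) * u + b) + a)))))
            ≤ 1 * Real.sqrt (1 / ((1 - u) * ((b + b) * ((b ^ 2 - 1) * (b + a))))) := by
              apply mul_le_mul (by linarith [ht.2]) (Real.sqrt_le_sqrt hq)
                (Real.sqrt_nonneg _) (by norm_num)
          _ = Real.sqrt (1 / ((b + b) * ((b ^ 2 - 1) * (b + a)))) *
              (1 / Real.sqrt (1 - u)) := by
              rw [one_mul, div_mul_eq_div_div_swap,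
                Real.sqrt_div (by positivity) (1 - u), div_eq_mul_one_div]
      · exact intInt_one_div_sqrt'.const_mul _
      · filter_upwards [hIoo] with u hu' hmem
        have hu := hu' hmem
        have h1 : Tendsto (fun t : ℝ => t - b) (𝓝[>] b) (𝓝 0) := by
          have hc : Continuous fun t : ℝ => t - b := by fun_prop
          have := (hc.tendsto b).mono_left (nhdsWithin_le_nhds (s := Set.Ioi b))
          simpa using this
        have hdenpos : 0 < (1 - u) * ((b + b) * ((b ^ 2 - 1) * (b + a))) :=
          mul_pos (by linarith [hu.2]) (mul_pos (by linarith) (mul_pos hb2 hba))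
        have hden : Tendsto (fun t : ℝ => (1 - u) * ((t + ((t - b) * u + b)) *
            ((((t - b) * u + b) ^ 2 - 1) * (((t - b) * u + b) + a)))) (𝓝[>] b)
            (𝓝 ((1 - u) * ((b + b) * ((b ^ 2 - 1) * (b + a))))) := by
          have hc : Continuous fun t : ℝ => (1 - u) * ((t + ((t - b) * u + b)) *
              ((((t - b) * u + b) ^ 2 - 1) * (((t - b) * u + b) + a))) := by fun_prop
          have := (hc.tendsto b).mono_left (nhdsWithin_le_nhds (s := Set.Ioi b))
          simpa using this
        have h2 : Tendsto (fun t : ℝ => Real.sqrt (u / ((1 - u) *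
            ((t + ((t - b) * u + b)) *
              ((((t - b) * u + b) ^ 2 - 1) * (((t - b) * u + b) + a)))))) (𝓝[>] b)
            (𝓝 (Real.sqrt (u / ((1 - u) * ((b + b) * ((b ^ 2 - 1) * (b + a))))))) :=
          (Filter.Tendsto.div tendsto_const_nhds hden hdenpos.ne').sqrt
        have h3 := h1.mul h2
        rw [zero_mul] at h3
        apply Tendsto.congr' ?_ h3
        filter_upwards [self_mem_nhdsWithin] with t ht
        rw [keyI t ht u]
    rw [intervalIntegral.integral_const (c := (0:ℝ))] at hI
    simp only [smul_zero] at hI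
    apply Tendsto.congr' ?_ hI
    filter_upwards [self_mem_nhdsWithin] with t ht
    exact (comp_rep (fun z => Real.sqrt ((z - b) /
      ((t ^ 2 - z ^ 2) * (z ^ 2 - 1) * (z + a)))) ht).symm
  · -- J5 → π √((a+b)/(2b(b²-1)))
    have hJ : Tendsto (fun t => ∫ u in (0:ℝ)..1,
        (t - b) * Real.sqrt ((((t - b) * u + b) + a) /
          ((t ^ 2 - ((t - b) * u + b) ^ 2) * (((t - b) * u + b) ^ 2 - 1) *
            (((t - b) * u + b) - b)))) (𝓝[>] b)
        (𝓝 (∫ u in (0:ℝ)..1,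
          Real.sqrt ((b + a) / ((u * (1 - u)) * ((b + b) * (b ^ 2 - 1)))))) := by
      apply intervalIntegral.tendsto_integral_filter_of_dominated_convergence
        (bound := fun u => Real.sqrt ((a + b + 1) / ((b + b) * (b ^ 2 - 1))) *
          (Real.sqrt 2 * (1 / Real.sqrt u) + Real.sqrt 2 * (1 / Real.sqrt (1 - u))))
      · refine Filter.Eventually.of_forall fun t => ?_
        have hc1 : Continuous fun u : ℝ => ((t - b) * u + b) + a := by fun_prop
        have hc2 : Continuous fun u : ℝ =>
            (t ^ 2 - ((t - b) * u + b) ^ 2) * (((t - b) * u + b) ^ 2 - 1) *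
              (((t - b) * u + b) - b) := by fun_prop
        exact ((Measurable.sqrt (hc1.measurable.div hc2.measurable)).const_mul
          _).aestronglyMeasurable
      · filter_upwards [hev] with t ht
        filter_upwards [hIoo] with u hu' hmem
        have hu := hu' hmem
        have hs : 0 < t - b := sub_pos.mpr ht.1
        have hzb : b < (t - b) * u + b := by nlinarith [hu.1]
        have hzt : (t - b) * u + b ≤ t := by nlinarith [hu.2]
        have hz1 : 1 < (t - b) * u + b := by linarith
        have hz2 : 0 < ((t - b) * u + b) ^ 2 - 1 := by nlinarith
        have hcJ : 0 < (b + b) * (b ^ 2 - 1) := mul_pos (by linarith) hb2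
        have hw : 0 < u * (1 - u) := mul_pos hu.1 (by linarith [hu.2])
        have hXge : (u * (1 - u)) * ((b + b) * (b ^ 2 - 1))
            ≤ (u * (1 - u)) * ((t + ((t - b) * u + b)) * (((t - b) * u + b) ^ 2 - 1)) := by
          apply mul_le_mul_of_nonneg_left ?_ hw.le
          apply mul_le_mul (by linarith) (by nlinarith) hb2.le (by linarith)
        have hq : (((t - b) * u + b) + a) /
              ((u * (1 - u)) * ((t + ((t - b) * u + b)) * (((t - b) * u + b) ^ 2 - 1)))
            ≤ (a + b + 1) / ((u * (1 - u)) * ((b + b) * (b ^ 2 - 1))) :=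
          div_le_div₀ (by linarith [ht.2]) (by linarith [ht.2])
            (mul_pos hw hcJ) hXge
        rw [Real.norm_eq_abs,
          abs_of_nonneg (mul_nonneg (by linarith) (Real.sqrt_nonneg _))]
        rw [keyJ t ht.1 u hu]
        calc Real.sqrt ((((t - b) * u + b) + a) /
              ((u * (1 - u)) * ((t + ((t - b) * u + b)) * (((t - b) * u + b) ^ 2 - 1))))
            ≤ Real.sqrt ((a + b + 1) / ((u * (1 - u)) * ((b + b) * (b ^ 2 - 1)))) :=
              Real.sqrt_le_sqrt hq
          _ = Real.sqrt ((a + b + 1) / ((b + b) * (b ^ 2 - 1))) *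
              (1 / Real.sqrt (u * (1 - u))) := by
              rw [div_mul_eq_div_div_swap,
                Real.sqrt_div (div_nonneg (by linarith) hcJ.le) (u * (1 - u)),
                div_eq_mul_one_div]
          _ ≤ Real.sqrt ((a + b + 1) / ((b + b) * (b ^ 2 - 1))) *
              (Real.sqrt 2 * (1 / Real.sqrt u) + Real.sqrt 2 * (1 / Real.sqrt (1 - u))) :=
              mul_le_mul_of_nonneg_left (aux_sqrt_bound hu) (Real.sqrt_nonneg _)
      · exact ((intInt_one_div_sqrt.const_mul _).add
          (intInt_one_div_sqrt'.const_mul _)).const_mul _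
      · filter_upwards [hIoo] with u hu' hmem
        have hu := hu' hmem
        have hdenpos : 0 < (u * (1 - u)) * ((b + b) * (b ^ 2 - 1)) :=
          mul_pos (mul_pos hu.1 (by linarith [hu.2])) (mul_pos (by linarith) hb2)
        have hnum : Tendsto (fun t : ℝ => ((t - b) * u + b) + a) (𝓝[>] b) (𝓝 (b + a)) := by
          have hc : Continuous fun t : ℝ => ((t - b) * u + b) + a := by fun_prop
          have := (hc.tendsto b).mono_left (nhdsWithin_le_nhds (s := Set.Ioi b))
          simpa using this
        have hden : Tendsto (fun t : ℝ => (u * (1 - u)) *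
            ((t + ((t - b) * u + b)) * (((t - b) * u + b) ^ 2 - 1))) (𝓝[>] b)
            (𝓝 ((u * (1 - u)) * ((b + b) * (b ^ 2 - 1)))) := by
          have hc : Continuous fun t : ℝ => (u * (1 - u)) *
              ((t + ((t - b) * u + b)) * (((t - b) * u + b) ^ 2 - 1)) := by fun_prop
          have := (hc.tendsto b).mono_left (nhdsWithin_le_nhds (s := Set.Ioi b))
          simpa using this
        have hmain := (hnum.div hden hdenpos.ne').sqrt
        apply Tendsto.congr' ?_ hmain
        filter_upwards [self_mem_nhdsWithin] with t ht
        exact (keyJ t ht u hu).symm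
    have hval : (∫ u in (0:ℝ)..1,
        Real.sqrt ((b + a) / ((u * (1 - u)) * ((b + b) * (b ^ 2 - 1)))))
        = π * Real.sqrt ((a + b) / (2 * b * (b ^ 2 - 1))) := by
      have hcJ : 0 < (b + b) * (b ^ 2 - 1) := mul_pos (by linarith) hb2
      have hfe : ∀ u : ℝ, Real.sqrt ((b + a) / ((u * (1 - u)) * ((b + b) * (b ^ 2 - 1))))
          = Real.sqrt ((b + a) / ((b + b) * (b ^ 2 - 1))) * (1 / Real.sqrt (u * (1 - u))) := by
        intro u
        rcases lt_trichotomy (u * (1 - u)) 0 with hw | hw | hw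
        · have hd : (u * (1 - u)) * ((b + b) * (b ^ 2 - 1)) < 0 :=
            mul_neg_of_neg_of_pos hw hcJ
          rw [Real.sqrt_eq_zero_of_nonpos
              (le_of_lt (div_neg_of_pos_of_neg (by linarith) hd)),
            Real.sqrt_eq_zero_of_nonpos hw.le, div_zero, mul_zero]
        · rw [hw]
          simp
        · rw [div_mul_eq_div_div_swap,
            Real.sqrt_div (div_nonneg (by linarith) hcJ.le) (u * (1 - u)),
            div_eq_mul_one_div]
      simp_rw [hfe]
      rw [intervalIntegral.integral_const_mul, integral_A]
      rw [show (b + a) / ((b + b) * (b ^ 2 - 1)) = (a + b) / (2 * b * (b ^ 2 - 1)) by ring]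
      ring
    rw [hval] at hJ
    apply Tendsto.congr' ?_ hJ
    filter_upwards [self_mem_nhdsWithin] with t ht
    exact (comp_rep (fun z => Real.sqrt ((z + a) /
      ((t ^ 2 - z ^ 2) * (z ^ 2 - 1) * (z - b)))) ht).symm
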